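/- For the 4̄2m crystal class tensor T (T₁₂₃ = T₁₃₂ = T₂₁₃ = T₂₃₁ = T₃₁₂ = T₃₂₁ = χ₁₄, all other components zero), the largest C-eigenvalue equals λ_max = (2√3/3)|χ₁₄|; that is, max{ 2χ₁₄(x₁y₂y₃ + x₂y₁y₃ + x₃y₁y₂) : ‖x‖ = ‖y‖ = 1 } = (2/√3)|χ₁₄|. -/

import Mathlib

lemma aux15 (x1 x2 x3 y1 y2 y3 : ℝ) (hx : x1 ^ 2 + x2 ^ 2 + x3 ^ 2 = 1)
    (hy : y1 ^ 2 + y2 ^ 2 + y3 ^ 2 = 1) :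
    (x1 * y2 * y3 + x2 * y1 * y3 + x3 * y1 * y2) ^ 2 ≤ 1 / 3 := by
  nlinarith [sq_nonneg (x1 * (y1 * y3) - x2 * (y2 * y3)),
    sq_nonneg (x1 * (y1 * y2) - x3 * (y2 * y3)),
    sq_nonneg (x2 * (y1 * y2) - x3 * (y1 * y3)),
    sq_nonneg (y1 ^ 2 - y2 ^ 2), sq_nonneg (y2 ^ 2 - y3 ^ 2), sq_nonneg (y1 ^ 2 - y3 ^ 2),
    sq_nonneg (y1 * y2), sq_nonneg (y2 * y3), sq_nonneg (y1 * y3),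
    sq_nonneg x1, sq_nonneg x2, sq_nonneg x3]

theorem stmt15 (χ : ℝ) :
    IsGreatest {v : ℝ | ∃ x1 x2 x3 y1 y2 y3 : ℝ,
        x1 ^ 2 + x2 ^ 2 + x3 ^ 2 = 1 ∧ y1 ^ 2 + y2 ^ 2 + y3 ^ 2 = 1 ∧
        v = 2 * χ * (x1 * y2 * y3 + x2 * y1 * y3 + x3 * y1 * y2)}
      (2 * Real.sqrt 3 / 3 * |χ|) := by
  have h3 : Real.sqrt 3 ^ 2 = 3 := Real.sq_sqrt (by norm_num)
  have h3pos : (0:ℝ) < Real.sqrt 3 := Real.sqrt_pos.mpr (by norm_num)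
  constructor
  · set s : ℝ := if 0 ≤ χ then 1 else -1 with hs
    have hs2 : s ^ 2 = 1 := by rcases le_or_gt 0 χ with h | h <;> simp [hs, h, not_le.mpr] <;> ring_nf <;> simp [not_le.mpr h]
    have hcs : χ * s = |χ| := by
      rcases le_or_gt 0 χ with h | h
      · simp [hs, h, abs_of_nonneg h]
      · simp [hs, not_le.mpr h, abs_of_neg h]
    refine ⟨s / Real.sqrt 3, s / Real.sqrt 3, s / Real.sqrt 3,
      1 / Real.sqrt 3, 1 / Real.sqrt 3, 1 / Real.sqrt 3, ?_, ?_, ?_⟩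
    · field_simp
      nlinarith [hs2, h3]
    · field_simp
      nlinarith [h3]
    · field_simp
      have h33 : Real.sqrt 3 * Real.sqrt 3 = 3 := Real.mul_self_sqrt (by norm_num)
      have key2 : Real.sqrt 3 * |χ| * Real.sqrt 3 = 3 * |χ| := by
        rw [mul_comm (Real.sqrt 3) |χ|, mul_assoc, h33]; ring
      have h4 : Real.sqrt 3 ^ 4 * |χ| = 9 * |χ| := by rw [show Real.sqrt 3 ^ 4 = (Real.sqrt 3 ^ 2) ^ 2 by ring, h3]; ring
      linarith [hcs, key2, h4]
  · rintro v ⟨x1, x2, x3, y1, y2, y3, hx, hy, rfl⟩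
    have key := aux15 x1 x2 x3 y1 y2 y3 hx hy
    have habs : |χ| ≥ 0 := abs_nonneg χ
    have h1 : χ * (x1 * y2 * y3 + x2 * y1 * y3 + x3 * y1 * y2) ≤ |χ| * (Real.sqrt 3 / 3) := by
      have h2 : |x1 * y2 * y3 + x2 * y1 * y3 + x3 * y1 * y2| ≤ Real.sqrt 3 / 3 := by
        rw [abs_le]
        constructor
        · nlinarith [key, h3, h3pos, sq_nonneg (x1 * y2 * y3 + x2 * y1 * y3 + x3 * y1 * y2 + Real.sqrt 3 / 3)]
        · nlinarith [key, h3, h3pos, sq_nonneg (x1 * y2 * y3 + x2 * y1 * y3 + x3 * y1 * y2 - Real.sqrt 3 / 3)]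
      calc χ * (x1 * y2 * y3 + x2 * y1 * y3 + x3 * y1 * y2)
          ≤ |χ * (x1 * y2 * y3 + x2 * y1 * y3 + x3 * y1 * y2)| := le_abs_self _
        _ = |χ| * |x1 * y2 * y3 + x2 * y1 * y3 + x3 * y1 * y2| := abs_mul _ _
        _ ≤ |χ| * (Real.sqrt 3 / 3) := by
            exact mul_le_mul_of_nonneg_left h2 habs
    nlinarith [h1]
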